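/- Let X and Y be finite types and f : X → X, g : Y → Y maps such that the equivalence relation on X generated by the pairs (x, f x) has exactly one class, and likewise for (Y, g) (each graph is connected, hence a wheel). Let p be the number of periodic points of f (points x with f^[k] x = x for some k > 0) and q the number of periodic points of g. Then the equivalence relation on X × Y generated by the pairs (z, (Prod.map f g) z) has exactly gcd(p, q) equivalence classes. (The smash product of two wheels with cycle lengths p and q has gcd(p, q) connected components.) -/
import Mathlib

set_option linter.unusedSectionVars false

open Function

section Aux
variable {X : Type*} (f : X → X)

lemma SW.eqvGen_iterate (a : X) (m : ℕ) :
    Relation.EqvGen (fun x y : X => y = f x) a (f^[m] a) := by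
  induction m with
  | zero => exact Relation.EqvGen.refl a
  | succ n ih =>
    rw [Function.iterate_succ_apply']
    exact Relation.EqvGen.trans _ _ _ ih (Relation.EqvGen.rel _ _ rfl)

lemma SW.eqvGen_iff (a b : X) :
    Relation.EqvGen (fun x y : X => y = f x) a b ↔ ∃ m n, f^[m] a = f^[n] b := by
  constructor
  · intro h
    induction h with
    | rel x y hxy => exact ⟨1, 0, by simp [hxy]⟩
    | refl x => exact ⟨0, 0, rfl⟩
    | symm x y _ ih => obtain ⟨m, n, h⟩ := ih; exact ⟨n, m, h.symm⟩
    | trans x y z _ _ ih₁ ih₂ =>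
      obtain ⟨m, n, h₁⟩ := ih₁
      obtain ⟨m', n', h₂⟩ := ih₂
      refine ⟨m' + m, n + n', ?_⟩
      rw [Function.iterate_add_apply, h₁, ← Function.iterate_add_apply, add_comm m' n,
        Function.iterate_add_apply, h₂, ← Function.iterate_add_apply]
  · rintro ⟨m, n, h⟩
    refine Relation.EqvGen.trans _ _ _ (SW.eqvGen_iterate f a m) ?_
    rw [h]
    exact Relation.EqvGen.symm _ _ (SW.eqvGen_iterate f b n)

lemma SW.exists_iter_periodic [Finite X] (x : X) :
    ∃ M, f^[M] x ∈ periodicPts f := by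
  obtain ⟨m, n, hne, h⟩ := Finite.exists_ne_map_eq_of_infinite (fun k : ℕ => f^[k] x)
  rcases hne.lt_or_gt with hlt | hlt
  · refine ⟨m, mk_mem_periodicPts (Nat.sub_pos_of_lt hlt) ?_⟩
    show f^[n - m] (f^[m] x) = f^[m] x
    rw [← Function.iterate_add_apply, Nat.sub_add_cancel hlt.le, h]
  · refine ⟨n, mk_mem_periodicPts (Nat.sub_pos_of_lt hlt) ?_⟩
    show f^[m - n] (f^[n] x) = f^[n] x
    rw [← Function.iterate_add_apply, Nat.sub_add_cancel hlt.le, ← h]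

end Aux

section Iota

variable {X : Type*} [Finite X] (f : X → X) (x₀ : X)

lemma SW.iterate_mem_periodicPts {x : X} (hx : x ∈ periodicPts f) (k : ℕ) :
    f^[k] x ∈ periodicPts f := by
  obtain ⟨t, ht, h⟩ := mem_periodicPts.mp hx
  exact mem_periodicPts.mpr ⟨t, ht, h.apply_iterate k⟩

lemma SW.cast_eq (hx₀ : x₀ ∈ periodicPts f) {i j : ℕ} (h : f^[i] x₀ = f^[j] x₀) :
    (i : ZMod (minimalPeriod f x₀)) = j := by
  have hp : 0 < minimalPeriod f x₀ := minimalPeriod_pos_of_mem_periodicPts hx₀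
  rw [ZMod.natCast_eq_natCast_iff]
  show i % minimalPeriod f x₀ = j % minimalPeriod f x₀
  apply iterate_injOn_Iio_minimalPeriod (Nat.mod_lt _ hp) (Nat.mod_lt _ hp)
  show f^[i % minimalPeriod f x₀] x₀ = f^[j % minimalPeriod f x₀] x₀
  rw [iterate_mod_minimalPeriod_eq, iterate_mod_minimalPeriod_eq, h]

noncomputable def SW.iota (horb : ∀ y ∈ periodicPts f, ∃ m, f^[m] x₀ = y) (x : X) :
    ZMod (minimalPeriod f x₀) :=
  ((horb _ (SW.exists_iter_periodic f x).choose_spec).choose : ZMod (minimalPeriod f x₀)) -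
    ((SW.exists_iter_periodic f x).choose : ℕ)

lemma SW.iota_spec (hx₀ : x₀ ∈ periodicPts f)
    (horb : ∀ y ∈ periodicPts f, ∃ m, f^[m] x₀ = y) (x : X) {M c : ℕ}
    (h : f^[M] x = f^[c] x₀) :
    SW.iota f x₀ horb x = (c : ZMod (minimalPeriod f x₀)) - M := by
  unfold SW.iota
  set M₀ := (SW.exists_iter_periodic f x).choose with hM₀def
  have hper := (SW.exists_iter_periodic f x).choose_spec
  set a := (horb _ hper).choose with hadef
  have ha : f^[a] x₀ = f^[M₀] x := (horb _ hper).choose_spec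
  have key : f^[M + a] x₀ = f^[M₀ + c] x₀ := by
    rw [iterate_add_apply, ha, ← iterate_add_apply, add_comm M M₀, iterate_add_apply, h,
      ← iterate_add_apply]
  have hc := SW.cast_eq f x₀ hx₀ key
  push_cast at hc ⊢
  linear_combination hc

lemma SW.iota_apply (hx₀ : x₀ ∈ periodicPts f)
    (horb : ∀ y ∈ periodicPts f, ∃ m, f^[m] x₀ = y) (x : X) :
    SW.iota f x₀ horb (f x) = SW.iota f x₀ horb x + 1 := by
  obtain ⟨M, hM⟩ := SW.exists_iter_periodic f x
  obtain ⟨a, ha⟩ := horb _ hM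
  have h1 := SW.iota_spec f x₀ hx₀ horb x ha.symm
  have h2 : f^[M] (f x) = f^[a + 1] x₀ := by
    rw [← iterate_succ_apply, iterate_succ_apply', ← ha]
    exact (iterate_succ_apply' f a x₀).symm
  have h3 := SW.iota_spec f x₀ hx₀ horb (f x) h2
  rw [h1, h3]
  push_cast
  ring

lemma SW.wheel_setup (hconn : ∀ a b : X, ∃ m n, f^[m] a = f^[n] b) (hne : Nonempty X) :
    ∃ x₀ ∈ periodicPts f, ∀ y ∈ periodicPts f, ∃ m, f^[m] x₀ = y := by
  obtain ⟨M, hM⟩ := SW.exists_iter_periodic f (Classical.arbitrary X)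
  refine ⟨_, hM, fun y hy => ?_⟩
  obtain ⟨t, ht, hty⟩ := mem_periodicPts.mp hy
  obtain ⟨m, n, hmn⟩ := hconn (f^[M] (Classical.arbitrary X)) y
  refine ⟨n * (t - 1) + m, ?_⟩
  have h1 : f^[n * (t - 1)] (f^[n] y) = y := by
    rw [← iterate_add_apply]
    have h2 : n * (t - 1) + n = n * t := by
      cases t with
      | zero => omega
      | succ t' => simp [Nat.mul_succ]
    rw [h2]
    exact hty.const_mul n
  rw [iterate_add_apply, hmn, h1]

lemma SW.card_periodic (hx₀ : x₀ ∈ periodicPts f)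
    (horb : ∀ y ∈ periodicPts f, ∃ m, f^[m] x₀ = y) :
    Nat.card {x : X // ∃ k : ℕ, 0 < k ∧ f^[k] x = x} = minimalPeriod f x₀ := by
  have hp : 0 < minimalPeriod f x₀ := minimalPeriod_pos_of_mem_periodicPts hx₀
  have hpp : IsPeriodicPt f (minimalPeriod f x₀) x₀ := isPeriodicPt_minimalPeriod f x₀
  have := Nat.card_eq_of_bijective
    (f := fun i : Fin (minimalPeriod f x₀) =>
      (⟨f^[(i : ℕ)] x₀, minimalPeriod f x₀, hp, by
        rw [← iterate_add_apply, add_comm, iterate_add_apply,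
          show f^[minimalPeriod f x₀] x₀ = x₀ from hpp]⟩ :
        {x : X // ∃ k : ℕ, 0 < k ∧ f^[k] x = x}))
    ?_
  · rw [← this, Nat.card_eq_fintype_card, Fintype.card_fin]
  constructor
  · intro i j hij
    have := congrArg Subtype.val hij
    exact Fin.ext (iterate_injOn_Iio_minimalPeriod i.isLt j.isLt this)
  · rintro ⟨y, k, hk, hky⟩
    obtain ⟨m, hm⟩ := horb y (mk_mem_periodicPts hk hky)
    refine ⟨⟨m % minimalPeriod f x₀, Nat.mod_lt _ hp⟩, Subtype.ext ?_⟩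
    show f^[m % minimalPeriod f x₀] x₀ = y
    rw [iterate_mod_minimalPeriod_eq, hm]

lemma SW.arith (A A' p : ℕ) (hp : 0 < p) : A + (A' + A * (p - 1)) = A' + A * p := by
  obtain ⟨p', rfl⟩ := Nat.exists_eq_succ_of_ne_zero hp.ne'
  simp [Nat.mul_succ]
  ring

end Iota

/-- **Proposition (components of the smash product of two wheels).**
Let `X`, `Y` be finite types with maps `f : X → X`, `g : Y → Y` whose graphs are
connected (wheels), and let `p`, `q` be the numbers of periodic points of `f`
and `g` (the cycle lengths).  Then the equivalence relation on `X × Y` generated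
by the pairs `(z, Prod.map f g z)` has exactly `gcd (p, q)` equivalence classes:
the smash product of two wheels with cycle lengths `p` and `q` has `gcd (p, q)`
connected components. -/
theorem smash_wheel_wheel_components {X Y : Type*} [Finite X] [Finite Y]
    (f : X → X) (g : Y → Y)
    (hXconn : Nat.card (Quot (Relation.EqvGen (fun x y : X => y = f x))) = 1)
    (hYconn : Nat.card (Quot (Relation.EqvGen (fun x y : Y => y = g x))) = 1) :
    Nat.card (Quot (Relation.EqvGen
        (fun z w : X × Y => w = Prod.map f g z))) =
      Nat.gcd (Nat.card {x : X // ∃ k : ℕ, 0 < k ∧ f^[k] x = x})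
        (Nat.card {y : Y // ∃ k : ℕ, 0 < k ∧ g^[k] y = y}) := by
  classical
  obtain ⟨hXsub, hXne⟩ := Nat.card_eq_one_iff_unique.mp hXconn
  obtain ⟨hYsub, hYne⟩ := Nat.card_eq_one_iff_unique.mp hYconn
  have hXc : ∀ a b : X, ∃ m n, f^[m] a = f^[n] b := by
    intro a b
    rw [← SW.eqvGen_iff]
    have h := Quot.eqvGen_exact (r := Relation.EqvGen (fun x y : X => y = f x))
      (a := a) (b := b) (Subsingleton.elim _ _)
    rwa [(Relation.EqvGen.is_equivalence _).eqvGen_eq] at h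
  have hYc : ∀ a b : Y, ∃ m n, g^[m] a = g^[n] b := by
    intro a b
    rw [← SW.eqvGen_iff]
    have h := Quot.eqvGen_exact (r := Relation.EqvGen (fun x y : Y => y = g x))
      (a := a) (b := b) (Subsingleton.elim _ _)
    rwa [(Relation.EqvGen.is_equivalence _).eqvGen_eq] at h
  have hXne' : Nonempty X := by
    obtain ⟨z⟩ := hXne
    obtain ⟨a, -⟩ := z.exists_rep
    exact ⟨a⟩
  have hYne' : Nonempty Y := by
    obtain ⟨z⟩ := hYne
    obtain ⟨a, -⟩ := z.exists_rep
    exact ⟨a⟩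
  obtain ⟨x₀, hx₀, horbX⟩ := SW.wheel_setup f hXc hXne'
  obtain ⟨y₀, hy₀, horbY⟩ := SW.wheel_setup g hYc hYne'
  rw [SW.card_periodic f x₀ hx₀ horbX, SW.card_periodic g y₀ hy₀ horbY]
  set p := Function.minimalPeriod f x₀ with hpdef
  set q := Function.minimalPeriod g y₀ with hqdef
  have hp : 0 < p := Function.minimalPeriod_pos_of_mem_periodicPts hx₀
  have hq : 0 < q := Function.minimalPeriod_pos_of_mem_periodicPts hy₀
  set d := Nat.gcd p q with hddef
  have hd : 0 < d := Nat.gcd_pos_of_pos_left q hp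
  haveI : NeZero d := ⟨hd.ne'⟩
  have hp0 : (p : ZMod d) = 0 := (ZMod.natCast_eq_zero_iff p d).mpr (Nat.gcd_dvd_left p q)
  have hq0 : (q : ZMod d) = 0 := (ZMod.natCast_eq_zero_iff q d).mpr (Nat.gcd_dvd_right p q)
  set cp : ZMod p →+* ZMod d := ZMod.castHom (Nat.gcd_dvd_left p q) (ZMod d) with hcp
  set cq : ZMod q →+* ZMod d := ZMod.castHom (Nat.gcd_dvd_right p q) (ZMod d) with hcq
  set Φ : X × Y → ZMod d :=
    fun z => cp (SW.iota f x₀ horbX z.1) - cq (SW.iota g y₀ horbY z.2) with hΦdef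
  have hΦstep : ∀ z : X × Y, Φ (Prod.map f g z) = Φ z := by
    rintro ⟨x, y⟩
    show cp (SW.iota f x₀ horbX (f x)) - cq (SW.iota g y₀ horbY (g y)) = _
    rw [SW.iota_apply f x₀ hx₀ horbX x, SW.iota_apply g y₀ hy₀ horbY y]
    simp only [map_add, map_one]
    ring
  have hΦinv : ∀ a b : X × Y,
      Relation.EqvGen (fun z w : X × Y => w = Prod.map f g z) a b → Φ a = Φ b := by
    intro a b h
    induction h with
    | rel u v huv => rw [huv, hΦstep]
    | refl u => rfl
    | symm u v _ ih => exact ih.symm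
    | trans u v w _ _ ih₁ ih₂ => exact ih₁.trans ih₂
  set Φbar : Quot (Relation.EqvGen (fun z w : X × Y => w = Prod.map f g z)) → ZMod d :=
    Quot.lift Φ hΦinv with hΦbar
  have hbij : Function.Bijective Φbar := by
    constructor
    · intro zq wq
      induction zq using Quot.ind with | _ z => ?_
      induction wq using Quot.ind with | _ w => ?_
      intro h
      obtain ⟨x, y⟩ := z
      obtain ⟨x', y'⟩ := w
      apply Quot.sound
      rw [SW.eqvGen_iff]
      obtain ⟨Mx, hMx⟩ := SW.exists_iter_periodic f x
      obtain ⟨My, hMy⟩ := SW.exists_iter_periodic g y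
      obtain ⟨Mx', hMx'⟩ := SW.exists_iter_periodic f x'
      obtain ⟨My', hMy'⟩ := SW.exists_iter_periodic g y'
      set Kz := Mx + My with hKz
      set Kw := Mx' + My' with hKw
      have hxP : f^[Kz] x ∈ Function.periodicPts f := by
        rw [hKz, add_comm, Function.iterate_add_apply]
        exact SW.iterate_mem_periodicPts f hMx My
      have hyP : g^[Kz] y ∈ Function.periodicPts g := by
        rw [hKz, Function.iterate_add_apply]
        exact SW.iterate_mem_periodicPts g hMy Mx
      have hxP' : f^[Kw] x' ∈ Function.periodicPts f := by
        rw [hKw, add_comm, Function.iterate_add_apply]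
        exact SW.iterate_mem_periodicPts f hMx' My'
      have hyP' : g^[Kw] y' ∈ Function.periodicPts g := by
        rw [hKw, Function.iterate_add_apply]
        exact SW.iterate_mem_periodicPts g hMy' Mx'
      obtain ⟨A, hA⟩ := horbX _ hxP
      obtain ⟨B, hB⟩ := horbY _ hyP
      obtain ⟨A', hA'⟩ := horbX _ hxP'
      obtain ⟨B', hB'⟩ := horbY _ hyP'
      have e1 := SW.iota_spec f x₀ hx₀ horbX x hA.symm
      have e2 := SW.iota_spec g y₀ hy₀ horbY y hB.symm
      have e3 := SW.iota_spec f x₀ hx₀ horbX x' hA'.symm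
      have e4 := SW.iota_spec g y₀ hy₀ horbY y' hB'.symm
      have h' : (A : ZMod d) - Kz - ((B : ZMod d) - Kz)
          = (A' : ZMod d) - Kw - ((B' : ZMod d) - Kw) := by
        have hΦz : Φ (x, y) = Φ (x', y') := h
        rw [hΦdef] at hΦz
        simp only [e1, e2, e3, e4, map_sub, map_natCast] at hΦz
        linear_combination hΦz
      have hAB : (A : ZMod d) + B' = (A' : ZMod d) + B := by linear_combination h'
      have hcong : (A' + A * (p - 1)) ≡ (B' + B * (q - 1)) [MOD d] := by
        rw [← ZMod.natCast_eq_natCast_iff]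
        push_cast [Nat.cast_sub hp, Nat.cast_sub hq]
        rw [hp0, hq0]
        linear_combination -hAB
      obtain ⟨s, hs1, hs2⟩ := Nat.chineseRemainder' hcong
      have harithA : A + (A' + A * (p - 1)) = A' + A * p := SW.arith A A' p hp
      have harithB : B + (B' + B * (q - 1)) = B' + B * q := SW.arith B B' q hq
      have hmodA : (A + s) ≡ A' [MOD p] := by
        calc A + s ≡ A + (A' + A * (p - 1)) [MOD p] := (Nat.ModEq.refl A).add hs1
          _ = A' + A * p := harithA
          _ ≡ A' + 0 [MOD p] :=
            (Nat.ModEq.refl A').add ((Nat.modEq_zero_iff_dvd).mpr (dvd_mul_left p A))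
          _ = A' := add_zero A'
      have hmodB : (B + s) ≡ B' [MOD q] := by
        calc B + s ≡ B + (B' + B * (q - 1)) [MOD q] := (Nat.ModEq.refl B).add hs2
          _ = B' + B * q := harithB
          _ ≡ B' + 0 [MOD q] :=
            (Nat.ModEq.refl B').add ((Nat.modEq_zero_iff_dvd).mpr (dvd_mul_left q B))
          _ = B' := add_zero B'
      have hAs : f^[A + s] x₀ = f^[A'] x₀ := by
        have hm : (A + s) % Function.minimalPeriod f x₀ = A' % Function.minimalPeriod f x₀ :=
          hmodA
        rw [← Function.iterate_mod_minimalPeriod_eq (n := A + s), hm,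
          Function.iterate_mod_minimalPeriod_eq]
      have hBs : g^[B + s] y₀ = g^[B'] y₀ := by
        have hm : (B + s) % Function.minimalPeriod g y₀ = B' % Function.minimalPeriod g y₀ :=
          hmodB
        rw [← Function.iterate_mod_minimalPeriod_eq (n := B + s), hm,
          Function.iterate_mod_minimalPeriod_eq]
      refine ⟨s + Kz, Kw, ?_⟩
      rw [Prod.map_iterate, Prod.map_iterate]
      have hxeq : f^[s + Kz] x = f^[Kw] x' := by
        rw [Function.iterate_add_apply, ← hA, ← Function.iterate_add_apply, add_comm s A,
          hAs, hA']
      have hyeq : g^[s + Kz] y = g^[Kw] y' := by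
        rw [Function.iterate_add_apply, ← hB, ← Function.iterate_add_apply, add_comm s B,
          hBs, hB']
      show (f^[s + Kz] x, g^[s + Kz] y) = (f^[Kw] x', g^[Kw] y')
      rw [hxeq, hyeq]
    · intro c
      obtain ⟨k, rfl⟩ := ZMod.natCast_zmod_surjective c
      refine ⟨Quot.mk _ (f^[k] x₀, y₀), ?_⟩
      show Φ (f^[k] x₀, y₀) = (k : ZMod d)
      have h1 : SW.iota f x₀ horbX (f^[k] x₀) = (k : ZMod p) - (0 : ℕ) :=
        SW.iota_spec f x₀ hx₀ horbX (f^[k] x₀) (rfl : f^[0] (f^[k] x₀) = f^[k] x₀)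
      have h2 : SW.iota g y₀ horbY y₀ = ((0 : ℕ) : ZMod q) - (0 : ℕ) :=
        SW.iota_spec g y₀ hy₀ horbY y₀ (rfl : g^[0] y₀ = g^[0] y₀)
      rw [hΦdef]
      simp only [h1, h2, map_sub, map_natCast]
      push_cast
      ring
  rw [Nat.card_eq_of_bijective Φbar hbij, Nat.card_zmod]
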